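/- Let ρ ∈ (0,1) and let U, V, E be independent exponential random variables with rate 1. Set r = ((1+ρ)² U + (1−ρ)² V) / ((1+ρ) U + (1−ρ) V) and X = r·E. Then for every x > 0, the density of X at x equals ((1−ρ²)/(2ρ)) ∫_{1−ρ}^{1+ρ} e^{−x/y} / (y (2−y)²) dy. -/

import Mathlib

open MeasureTheory ProbabilityTheory

noncomputable section

/-- Law of an exponential random variable with rate 1: density `e^{-x}` on `(0,∞)`. -/
def expMeasure : Measure ℝ :=
  volume.withDensity (Set.indicator (Set.Ioi 0) fun x => ENNReal.ofReal (Real.exp (-x)))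

section Aux
open Real Set
open scoped ENNReal NNReal

lemma expMeasure_apply {s : Set ℝ} (hs : MeasurableSet s) :
    _root_.expMeasure s = ∫⁻ x in s ∩ Set.Ioi 0, ENNReal.ofReal (Real.exp (-x)) := by
  rw [_root_.expMeasure, withDensity_apply _ hs, lintegral_indicator measurableSet_Ioi,
    Measure.restrict_restrict measurableSet_Ioi, Set.inter_comm]

lemma lint_exp_Ioi {c : ℝ} (hc : 0 < c) (w : ℝ) :
    ∫⁻ x in Set.Ioi w, ENNReal.ofReal (Real.exp (-(c * x))) = ENNReal.ofReal (Real.exp (-(c * w)) / c) := by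
  have hint : IntegrableOn (fun x => Real.exp (-(c * x))) (Set.Ioi w) := by
    simpa [neg_mul] using exp_neg_integrableOn_Ioi w hc
  rw [← ofReal_integral_eq_lintegral_ofReal hint (ae_of_all _ fun x => (Real.exp_pos _).le)]
  congr 1
  have := integral_comp_mul_left_Ioi (fun t => Real.exp (-t)) w hc
  simp only [smul_eq_mul] at this
  rw [this, integral_exp_neg_Ioi, inv_mul_eq_div]

lemma expMeasure_Ici {w : ℝ} (hw : 0 < w) :
    _root_.expMeasure (Set.Ici w) = ENNReal.ofReal (Real.exp (-w)) := by
  rw [expMeasure_apply measurableSet_Ici]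
  have h1 : Set.Ici w ∩ Set.Ioi 0 = Set.Ici w := by
    rw [Set.inter_eq_left]; exact fun x hx => lt_of_lt_of_le hw hx
  rw [h1, ← Measure.restrict_congr_set Ioi_ae_eq_Ici]
  have := lint_exp_Ioi one_pos w
  simpa using this

instance : IsProbabilityMeasure _root_.expMeasure := by
  constructor
  rw [expMeasure_apply MeasurableSet.univ, Set.univ_inter]
  have := lint_exp_Ioi one_pos 0
  simpa using this

lemma expMeasure_Iic (x : ℝ) :
    _root_.expMeasure (Set.Iic x) = ENNReal.ofReal (1 - Real.exp (-x)) := by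
  rw [expMeasure_apply measurableSet_Iic]
  have h1 : Set.Iic x ∩ Set.Ioi 0 = Set.Ioc 0 x := by
    ext t; simp [Set.mem_Ioc, and_comm]
  rw [h1]
  rcases le_or_gt x 0 with hx | hx
  · rw [Set.Ioc_eq_empty (by exact fun h => absurd hx (not_le.mpr (lt_of_lt_of_le h (le_refl x))))]
    · symm
      rw [Measure.restrict_empty, lintegral_zero_measure, ENNReal.ofReal_eq_zero, sub_nonpos,
        ← Real.exp_zero]
      exact Real.exp_le_exp.mpr (by linarith)
  · have hint : IntegrableOn (fun v => Real.exp (-v)) (Set.Ioc 0 x) := by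
      simpa [neg_mul] using exp_neg_integrableOn_Ioc (x := x) one_pos
    rw [← ofReal_integral_eq_lintegral_ofReal hint (ae_of_all _ fun t => (Real.exp_pos _).le)]
    congr 1
    rw [← intervalIntegral.integral_of_le hx.le]
    rw [intervalIntegral.integral_comp_neg fun t => Real.exp t]
    rw [integral_exp]
    simp

lemma scale_density_mass {y : ℝ} (hy : 0 < y) :
    ∫⁻ x in Set.Ioi 0, ENNReal.ofReal (Real.exp (-x / y) / y) = 1 := by
  have heq : ∀ x : ℝ, ENNReal.ofReal (Real.exp (-x / y) / y)
      = ENNReal.ofReal (Real.exp (-(y⁻¹ * x))) * ENNReal.ofReal y⁻¹ := by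
    intro x
    rw [← ENNReal.ofReal_mul (Real.exp_pos _).le, div_eq_mul_inv]
    congr 2
    field_simp
  simp_rw [heq]
  rw [lintegral_mul_const' _ _ ENNReal.ofReal_ne_top, lint_exp_Ioi (inv_pos.mpr hy) 0,
    ← ENNReal.ofReal_mul (by positivity)]
  rw [mul_zero, neg_zero, Real.exp_zero]
  rw [show 1 / y⁻¹ * y⁻¹ = 1 by field_simp]
  exact ENNReal.ofReal_one

lemma map_scale_expMeasure {y : ℝ} (hy : 0 < y) :
    Measure.map (fun e => y * e) _root_.expMeasure
      = volume.withDensity ((Set.Ioi 0).indicator fun x => ENNReal.ofReal (Real.exp (-x / y) / y)) := by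
  have hmeas : Measurable fun e : ℝ => y * e := measurable_const_mul y
  have : IsProbabilityMeasure (Measure.map (fun e => y * e) _root_.expMeasure) :=
    Measure.isProbabilityMeasure_map hmeas.aemeasurable
  refine Measure.ext_of_Iic _ _ fun x => ?_
  rw [Measure.map_apply hmeas measurableSet_Iic]
  have hpre : (fun e => y * e) ⁻¹' Set.Iic x = Set.Iic (x / y) := by
    ext e; simp only [Set.mem_preimage, Set.mem_Iic]
    rw [le_div_iff₀ hy, mul_comm]
  rw [hpre, expMeasure_Iic]
  rw [withDensity_apply _ measurableSet_Iic, lintegral_indicator measurableSet_Ioi,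
    Measure.restrict_restrict measurableSet_Ioi]
  have h1 : Set.Ioi 0 ∩ Set.Iic x = Set.Ioc 0 x := Set.Ioi_inter_Iic
  rw [h1]
  rcases le_or_gt x 0 with hx | hx
  · rw [Set.Ioc_eq_empty (by exact fun h => absurd hx (not_le.mpr h)), Measure.restrict_empty,
      lintegral_zero_measure]
    refine ENNReal.ofReal_eq_zero.mpr ?_
    rw [sub_nonpos, ← Real.exp_zero]
    apply Real.exp_le_exp.mpr
    have : x / y ≤ 0 := div_nonpos_of_nonpos_of_nonneg hx hy.le
    linarith
  · have hcont : Continuous fun t : ℝ => Real.exp (-t / y) / y := by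
      apply Continuous.div_const
      exact (Continuous.div_const continuous_neg y).rexp
    have hint : IntegrableOn (fun t : ℝ => Real.exp (-t / y) / y) (Set.Ioc 0 x) :=
      hcont.integrableOn_Ioc
    rw [← ofReal_integral_eq_lintegral_ofReal hint
      (ae_of_all _ fun t => by positivity)]
    congr 1
    rw [← intervalIntegral.integral_of_le hx.le]
    have hderiv : ∀ t ∈ Set.uIcc (0 : ℝ) x,
        HasDerivAt (fun t : ℝ => -Real.exp (-t / y)) (Real.exp (-t / y) / y) t := by
      intro t _
      have h1 : HasDerivAt (fun t : ℝ => -t / y) (-1 / y) t :=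
        (hasDerivAt_id t).neg.div_const y
      have h2 := h1.exp.fun_neg
      exact h2.congr_deriv (by ring)
    rw [intervalIntegral.integral_eq_sub_of_hasDerivAt hderiv
      (hcont.intervalIntegrable 0 x)]
    simp only [neg_div, zero_div, neg_zero, Real.exp_zero]
    ring

lemma lint_exp_Ici {w : ℝ} :
    ∫⁻ v in Set.Ici w, ENNReal.ofReal (Real.exp (-v)) = ENNReal.ofReal (Real.exp (-w)) := by
  rw [← Measure.restrict_congr_set Ioi_ae_eq_Ici]
  simpa using lint_exp_Ioi one_pos w

lemma integral_inv_sq {b x : ℝ} (hb2 : b < 2) (hx2 : x < 2) :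
    ∫ y in b..x, ((2 - y) ^ 2)⁻¹ = (2 - x)⁻¹ - (2 - b)⁻¹ := by
  have hcont : ContinuousOn (fun y : ℝ => ((2 - y) ^ 2)⁻¹) (Set.uIcc b x) := by
    apply ContinuousOn.inv₀
    · exact ((continuous_const.sub continuous_id).pow 2).continuousOn
    · intro y hy
      have : y < 2 := lt_of_le_of_lt hy.2 (max_lt hb2 hx2)
      exact pow_ne_zero 2 (by linarith)
  have hderiv : ∀ y ∈ Set.uIcc b x,
      HasDerivAt (fun y : ℝ => (2 - y)⁻¹) (((2 - y) ^ 2)⁻¹) y := by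
    intro y hy
    have hy2 : y < 2 := lt_of_le_of_lt hy.2 (max_lt hb2 hx2)
    have hne : 2 - y ≠ 0 := by linarith
    have h1 : HasDerivAt (fun y : ℝ => 2 - y) (-1) y := (hasDerivAt_id y).const_sub 2
    have h2 := h1.fun_inv hne
    exact h2.congr_deriv (by ring)
  rw [intervalIntegral.integral_eq_sub_of_hasDerivAt hderiv (hcont.intervalIntegrable)]

lemma density_lint {ρ x : ℝ} (hρ0 : 0 < ρ) (hρ1 : ρ < 1) (hbx : 1 - ρ ≤ x) (hxa : x ≤ 1 + ρ) :
    ∫⁻ y in Set.Ioc (1 - ρ) x, ENNReal.ofReal ((1 - ρ ^ 2) / (2 * ρ) * ((2 - y) ^ 2)⁻¹)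
      = ENNReal.ofReal ((1 - ρ ^ 2) / (2 * ρ) * ((2 - x)⁻¹ - (1 + ρ)⁻¹)) := by
  have hx2 : x < 2 := by linarith
  have hb2 : 1 - ρ < 2 := by linarith
  have hcont : ContinuousOn (fun y : ℝ => (1 - ρ ^ 2) / (2 * ρ) * ((2 - y) ^ 2)⁻¹)
      (Set.Icc (1 - ρ) x) := by
    apply ContinuousOn.mul continuousOn_const
    apply ContinuousOn.inv₀ ((continuous_const.sub continuous_id).pow 2).continuousOn
    intro y hy
    exact pow_ne_zero 2 (by have h2 := hy.2; intro h; simp only [Pi.sub_apply, id_eq] at h; linarith)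
  have hint : IntegrableOn (fun y : ℝ => (1 - ρ ^ 2) / (2 * ρ) * ((2 - y) ^ 2)⁻¹)
      (Set.Ioc (1 - ρ) x) :=
    (hcont.integrableOn_Icc).mono_set Set.Ioc_subset_Icc_self
  rw [← ofReal_integral_eq_lintegral_ofReal hint (ae_of_all _ fun y => mul_nonneg (div_nonneg (by nlinarith) (by linarith)) (inv_nonneg.mpr (sq_nonneg _)))]
  congr 1
  rw [← intervalIntegral.integral_of_le hbx, intervalIntegral.integral_const_mul,
    integral_inv_sq hb2 hx2]
  have : (2 - (1 - ρ))⁻¹ = (1 + ρ)⁻¹ := by ring_nf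
  rw [this]

lemma lintegral_expMeasure {F : ℝ → ℝ≥0∞} (hF : Measurable F) :
    ∫⁻ u, F u ∂(_root_.expMeasure)
      = ∫⁻ u in Set.Ioi 0, ENNReal.ofReal (Real.exp (-u)) * F u := by
  have hd : Measurable ((Set.Ioi (0:ℝ)).indicator fun x => ENNReal.ofReal (Real.exp (-x))) :=
    Measurable.indicator (by fun_prop) measurableSet_Ioi
  rw [_root_.expMeasure, lintegral_withDensity_eq_lintegral_mul _ hd hF,
    ← lintegral_indicator measurableSet_Ioi]
  congr 1
  funext u
  by_cases hu : u ∈ Set.Ioi (0:ℝ) <;>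
    simp [Pi.mul_apply, Set.indicator_of_mem, Set.indicator_of_notMem, hu]

lemma rLaw {ρ : ℝ} (hρ0 : 0 < ρ) (hρ1 : ρ < 1) :
    Measure.map (fun p : ℝ × ℝ =>
        ((1 + ρ) ^ 2 * p.1 + (1 - ρ) ^ 2 * p.2) / ((1 + ρ) * p.1 + (1 - ρ) * p.2))
      (_root_.expMeasure.prod _root_.expMeasure)
    = volume.withDensity ((Set.Ioo (1 - ρ) (1 + ρ)).indicator
        fun y => ENNReal.ofReal ((1 - ρ ^ 2) / (2 * ρ) * ((2 - y) ^ 2)⁻¹)) := by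
  have hb : (0:ℝ) < 1 - ρ := by linarith
  have ha : (0:ℝ) < 1 + ρ := by linarith
  set g : ℝ × ℝ → ℝ := fun p =>
    ((1 + ρ) ^ 2 * p.1 + (1 - ρ) ^ 2 * p.2) / ((1 + ρ) * p.1 + (1 - ρ) * p.2) with hg_def
  have hg : Measurable g := by
    apply Measurable.div <;> fun_prop
  have : IsProbabilityMeasure
      (Measure.map g (_root_.expMeasure.prod _root_.expMeasure)) :=
    Measure.isProbabilityMeasure_map hg.aemeasurable
  refine Measure.ext_of_Iic _ _ fun x => ?_
  rw [Measure.map_apply hg measurableSet_Iic]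
  have hS : MeasurableSet (g ⁻¹' Set.Iic x) := hg measurableSet_Iic
  rw [Measure.prod_apply hS,
    lintegral_expMeasure (measurable_measure_prodMk_left hS)]
  rw [withDensity_apply _ measurableSet_Iic, lintegral_indicator measurableSet_Ioo,
    Measure.restrict_restrict measurableSet_Ioo]
  rcases le_or_gt x (1 - ρ) with hx | hx
  · -- x ≤ 1 - ρ : both sides zero
    have hempty : Set.Ioo (1 - ρ) (1 + ρ) ∩ Set.Iic x = ∅ := by
      ext y; simp only [Set.mem_inter_iff, Set.mem_Ioo, Set.mem_Iic, Set.mem_empty_iff_false,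
        iff_false, not_and, and_imp]
      intro h1 _ ; intro h3; linarith
    rw [hempty, Measure.restrict_empty, lintegral_zero_measure]
    rw [setLIntegral_congr_fun measurableSet_Ioi (fun u hu => ?_), lintegral_zero]
    have hsec : Prod.mk u ⁻¹' (g ⁻¹' Set.Iic x) ∩ Set.Ioi 0 = ∅ := by
      ext v
      simp only [Set.mem_inter_iff, Set.mem_preimage, Set.mem_Iic, Set.mem_Ioi,
        Set.mem_empty_iff_false, iff_false, not_and]
      intro hgv hv
      have hu' : 0 < u := hu
      have hden : 0 < (1 + ρ) * u + (1 - ρ) * v :=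
        add_pos (mul_pos ha hu) (mul_pos hb hv)
      rw [hg_def] at hgv
      simp only [div_le_iff₀ hden] at hgv
      nlinarith [mul_le_mul_of_nonneg_right hx hden.le, mul_pos hρ0 (mul_pos ha hu')]
    rw [expMeasure_apply (measurable_prodMk_left hS), hsec, Measure.restrict_empty,
      lintegral_zero_measure, mul_zero]
  · rcases lt_or_ge x (1 + ρ) with hxa | hxa
    · -- 1 - ρ < x < 1 + ρ
      set c : ℝ := (1 + ρ) * ((1 + ρ) - x) / ((1 - ρ) * (x - (1 - ρ))) with hc_def
      have hcden : 0 < (1 - ρ) * (x - (1 - ρ)) := mul_pos hb (by linarith)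
      have hc : 0 < c := div_pos (mul_pos ha (by linarith)) hcden
      have hinter : Set.Ioo (1 - ρ) (1 + ρ) ∩ Set.Iic x = Set.Ioc (1 - ρ) x := by
        ext y
        simp only [Set.mem_inter_iff, Set.mem_Ioo, Set.mem_Iic, Set.mem_Ioc]
        constructor
        · rintro ⟨⟨h1, h2⟩, h3⟩; exact ⟨h1, h3⟩
        · rintro ⟨h1, h3⟩; exact ⟨⟨h1, lt_of_le_of_lt h3 hxa⟩, h3⟩
      rw [hinter, density_lint hρ0 hρ1 (by linarith) (by linarith)]
      rw [setLIntegral_congr_fun measurableSet_Ioi (fun u hu => ?_)]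
      · rw [lint_exp_Ioi (show (0:ℝ) < 1 + c by linarith) 0]
        rw [mul_zero, neg_zero, Real.exp_zero]
        congr 1
        have h2x : (0:ℝ) < 2 - x := by linarith
        have h2xne : (2:ℝ) - x ≠ 0 := ne_of_gt h2x
        have hρne : ρ ≠ 0 := ne_of_gt hρ0
        have hane : (1:ℝ) + ρ ≠ 0 := ne_of_gt ha
        have hbne : (1:ℝ) - ρ ≠ 0 := ne_of_gt hb
        have hxbne : x - (1 - ρ) ≠ 0 := by intro h; rw [sub_eq_zero] at h; linarith
        have h1 : 1 + c = (2 * ρ * (2 - x)) / ((1 - ρ) * (x - (1 - ρ))) := by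
          rw [hc_def]
          field_simp
          ring
        rw [h1, one_div_div]
        field_simp
        ring
      · -- pointwise rewrite for u > 0
        have hsec : Prod.mk u ⁻¹' (g ⁻¹' Set.Iic x) ∩ Set.Ioi 0 = Set.Ici (c * u) := by
          ext v
          simp only [Set.mem_inter_iff, Set.mem_preimage, Set.mem_Iic, Set.mem_Ioi, Set.mem_Ici]
          constructor
          · rintro ⟨hgv, hv⟩
            have hden : 0 < (1 + ρ) * u + (1 - ρ) * v :=
              add_pos (mul_pos ha hu) (mul_pos hb hv)
            rw [hg_def] at hgv
            simp only [div_le_iff₀ hden] at hgv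
            rw [hc_def, div_mul_eq_mul_div, div_le_iff₀ hcden]
            nlinarith
          · intro hv'
            have hv : 0 < v := lt_of_lt_of_le (mul_pos hc hu) hv'
            have hden : 0 < (1 + ρ) * u + (1 - ρ) * v :=
              add_pos (mul_pos ha hu) (mul_pos hb hv)
            refine ⟨?_, hv⟩
            rw [hg_def]
            simp only [div_le_iff₀ hden]
            rw [hc_def, div_mul_eq_mul_div, div_le_iff₀ hcden] at hv'
            nlinarith
        rw [expMeasure_apply (measurable_prodMk_left hS), hsec, lint_exp_Ici,
          ← ENNReal.ofReal_mul (Real.exp_pos _).le, ← Real.exp_add]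
        congr 2
        ring
    · -- x ≥ 1 + ρ : both sides one
      have hinter : Set.Ioo (1 - ρ) (1 + ρ) ∩ Set.Iic x = Set.Ioo (1 - ρ) (1 + ρ) := by
        rw [Set.inter_eq_left]
        intro y hy; exact le_trans hy.2.le hxa
      rw [hinter, Measure.restrict_congr_set Ioo_ae_eq_Ioc,
        density_lint hρ0 hρ1 (by linarith) le_rfl]
      rw [setLIntegral_congr_fun measurableSet_Ioi (fun u hu => ?_)]
      · rw [lint_exp_Ioi one_pos 0]
        rw [mul_zero, neg_zero, Real.exp_zero]
        congr 1
        have : (2 - (1 + ρ)) = 1 - ρ := by ring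
        rw [this]
        field_simp
        ring
      · have hsec : Prod.mk u ⁻¹' (g ⁻¹' Set.Iic x) ∩ Set.Ioi 0 = Set.Ioi 0 := by
          rw [Set.inter_eq_right]
          intro v hv
          simp only [Set.mem_preimage, Set.mem_Iic]
          have hden : 0 < (1 + ρ) * u + (1 - ρ) * v :=
            add_pos (mul_pos ha hu) (mul_pos hb hv)
          rw [hg_def]
          simp only [div_le_iff₀ hden]
          have hv' : 0 < v := hv
          nlinarith [mul_le_mul_of_nonneg_right hxa hden.le, mul_pos hρ0 (mul_pos hb hv')]
        rw [expMeasure_apply (measurable_prodMk_left hS), hsec]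
        have h1 : ∫⁻ v in Set.Ioi (0:ℝ), ENNReal.ofReal (Real.exp (-v)) = 1 := by
          have := lint_exp_Ioi one_pos 0
          simpa using this
        rw [h1, mul_one]
        rw [show Real.exp (-u) = Real.exp (-(1 * u)) by rw [one_mul]]

lemma lint_wd {s : Set ℝ} (hs : MeasurableSet s) {d : ℝ → ℝ≥0∞} (hd : Measurable d)
    {F : ℝ → ℝ≥0∞} (hF : Measurable F) :
    ∫⁻ u, F u ∂(volume.withDensity (s.indicator d)) = ∫⁻ u in s, d u * F u := by
  rw [lintegral_withDensity_eq_lintegral_mul _ (hd.indicator hs) hF,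
    ← lintegral_indicator hs]
  congr 1
  funext u
  by_cases hu : u ∈ s <;>
    simp [Pi.mul_apply, Set.indicator_of_mem, Set.indicator_of_notMem, hu]

lemma mixLaw {ρ : ℝ} (hρ0 : 0 < ρ) (hρ1 : ρ < 1) (μ : Measure ℝ) [SFinite μ]
    (hμ : μ = volume.withDensity ((Set.Ioo (1 - ρ) (1 + ρ)).indicator
        fun y => ENNReal.ofReal ((1 - ρ ^ 2) / (2 * ρ) * ((2 - y) ^ 2)⁻¹))) :
    Measure.map (fun q : ℝ × ℝ => q.1 * q.2) (μ.prod _root_.expMeasure)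
      = volume.withDensity (Set.indicator (Set.Ioi 0) fun x =>
          ENNReal.ofReal ((1 - ρ ^ 2) / (2 * ρ)
            * ∫ y in (1 - ρ)..(1 + ρ), Real.exp (-x / y) / (y * (2 - y) ^ 2))) := by
  have hb : (0:ℝ) < 1 - ρ := by linarith
  have ha2 : (1:ℝ) + ρ < 2 := by linarith
  have hK : 0 ≤ (1 - ρ ^ 2) / (2 * ρ) := div_nonneg (by nlinarith) (by linarith)
  have hmul : Measurable fun q : ℝ × ℝ => q.1 * q.2 := measurable_fst.mul measurable_snd
  refine Measure.ext fun s hs => ?_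
  rw [Measure.map_apply hmul hs]
  have hT : MeasurableSet ((fun q : ℝ × ℝ => q.1 * q.2) ⁻¹' s) := hmul hs
  rw [Measure.prod_apply hT, hμ,
    lint_wd measurableSet_Ioo (by fun_prop) (measurable_measure_prodMk_left hT)]
  -- rewrite sections via the scaling law
  have hstep : ∀ y ∈ Set.Ioo (1 - ρ) (1 + ρ),
      ENNReal.ofReal ((1 - ρ ^ 2) / (2 * ρ) * ((2 - y) ^ 2)⁻¹)
          * _root_.expMeasure (Prod.mk y ⁻¹' ((fun q : ℝ × ℝ => q.1 * q.2) ⁻¹' s))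
        = ∫⁻ x in s, ENNReal.ofReal ((1 - ρ ^ 2) / (2 * ρ) * ((2 - y) ^ 2)⁻¹)
            * (Set.Ioi 0).indicator (fun x => ENNReal.ofReal (Real.exp (-x / y) / y)) x := by
    intro y hy
    have hy0 : 0 < y := lt_trans hb hy.1
    have hpre : Prod.mk y ⁻¹' ((fun q : ℝ × ℝ => q.1 * q.2) ⁻¹' s)
        = (fun e => y * e) ⁻¹' s := rfl
    rw [hpre, ← Measure.map_apply (measurable_const_mul y) hs, map_scale_expMeasure hy0,
      withDensity_apply _ hs,
      lintegral_const_mul' _ _ ENNReal.ofReal_ne_top]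
  rw [setLIntegral_congr_fun measurableSet_Ioo hstep]
  -- swap the two integrals
  have hH : Measurable fun p : ℝ × ℝ =>
      ENNReal.ofReal ((1 - ρ ^ 2) / (2 * ρ) * ((2 - p.1) ^ 2)⁻¹)
        * (Set.Ioi 0).indicator (fun x => ENNReal.ofReal (Real.exp (-x / p.1) / p.1)) p.2 := by
    apply Measurable.mul
    · fun_prop
    · have : (fun p : ℝ × ℝ =>
          (Set.Ioi 0).indicator (fun x => ENNReal.ofReal (Real.exp (-x / p.1) / p.1)) p.2)
          = fun p : ℝ × ℝ => if 0 < p.2 then ENNReal.ofReal (Real.exp (-p.2 / p.1) / p.1)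
              else 0 := by
        funext p
        by_cases h : (0:ℝ) < p.2 <;> simp [Set.indicator_apply, Set.mem_Ioi, h]
      rw [this]
      apply Measurable.ite (measurable_snd measurableSet_Ioi) _ measurable_const
      fun_prop
  rw [lintegral_lintegral_swap (hH.aemeasurable)]
  rw [withDensity_apply _ hs]
  refine lintegral_congr fun x => ?_
  rcases le_or_gt x 0 with hx | hx
  · rw [Set.indicator_of_notMem (by simpa using hx)]
    rw [setLIntegral_congr_fun measurableSet_Ioo
      (fun y hy => ?_), lintegral_zero]
    rw [Set.indicator_of_notMem (by simpa using hx), mul_zero]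
  · rw [Set.indicator_of_mem (Set.mem_Ioi.mpr hx)]
    have hcong : ∀ y ∈ Set.Ioo (1 - ρ) (1 + ρ),
        ENNReal.ofReal ((1 - ρ ^ 2) / (2 * ρ) * ((2 - y) ^ 2)⁻¹)
            * (Set.Ioi 0).indicator (fun x => ENNReal.ofReal (Real.exp (-x / y) / y)) x
          = ENNReal.ofReal ((1 - ρ ^ 2) / (2 * ρ) * ((2 - y) ^ 2)⁻¹
              * (Real.exp (-x / y) / y)) := by
      intro y hy
      rw [Set.indicator_of_mem (Set.mem_Ioi.mpr hx),
        ← ENNReal.ofReal_mul (mul_nonneg hK (inv_nonneg.mpr (sq_nonneg _)))]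
    rw [setLIntegral_congr_fun measurableSet_Ioo hcong]
    rw [Measure.restrict_congr_set Ioo_ae_eq_Ioc]
    have hcont : ContinuousOn (fun y : ℝ =>
        (1 - ρ ^ 2) / (2 * ρ) * ((2 - y) ^ 2)⁻¹ * (Real.exp (-x / y) / y))
        (Set.Icc (1 - ρ) (1 + ρ)) := by
      apply ContinuousOn.mul
      · apply ContinuousOn.mul continuousOn_const
        apply ContinuousOn.inv₀ ((continuous_const.sub continuous_id).pow 2).continuousOn
        intro y hy
        exact pow_ne_zero 2 (by intro h; simp only [Pi.sub_apply, id_eq] at h; have := hy.2; linarith)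
      · apply ContinuousOn.div
        · apply Continuous.comp_continuousOn Real.continuous_exp
          apply ContinuousOn.div continuousOn_const.neg continuousOn_id
          intro y hy h; have h' : y = 0 := h; have := hy.1; linarith
        · exact continuousOn_id
        · intro y hy h; have h' : y = 0 := h; have := hy.1; linarith
    have hint : IntegrableOn (fun y : ℝ =>
        (1 - ρ ^ 2) / (2 * ρ) * ((2 - y) ^ 2)⁻¹ * (Real.exp (-x / y) / y))
        (Set.Ioc (1 - ρ) (1 + ρ)) :=
      (hcont.integrableOn_Icc).mono_set Set.Ioc_subset_Icc_self
    have hnn : ∀ y ∈ Set.Ioc (1 - ρ) (1 + ρ), 0 ≤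
        (1 - ρ ^ 2) / (2 * ρ) * ((2 - y) ^ 2)⁻¹ * (Real.exp (-x / y) / y) := by
      intro y hy
      have hy0 : 0 < y := lt_trans hb hy.1
      exact mul_nonneg (mul_nonneg hK (inv_nonneg.mpr (sq_nonneg _)))
        (div_nonneg (Real.exp_pos _).le hy0.le)
    rw [← ofReal_integral_eq_lintegral_ofReal hint
      ((ae_restrict_iff' measurableSet_Ioc).mpr (ae_of_all _ hnn))]
    congr 1
    rw [← intervalIntegral.integral_of_le (by linarith)]
    rw [← intervalIntegral.integral_const_mul]
    apply intervalIntegral.integral_congr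
    intro y hy
    rw [Set.uIcc_of_le (by linarith : (1 - ρ:ℝ) ≤ 1 + ρ)] at hy
    have hy0 : (0:ℝ) < y := lt_of_lt_of_le hb hy.1
    have h2y : (2:ℝ) - y ≠ 0 := by have := hy.2; intro h; linarith
    field_simp

end Aux

theorem stmt_13 {Ω : Type*} [MeasurableSpace Ω] (P : Measure Ω) [IsProbabilityMeasure P]
    (ρ : ℝ) (hρ : ρ ∈ Set.Ioo (0 : ℝ) 1)
    (U V E : Ω → ℝ)
    (hlaw : Measure.map (fun ω => (U ω, V ω, E ω)) P
      = expMeasure.prod (expMeasure.prod expMeasure)) :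
    Measure.map
        (fun ω =>
          ((1 + ρ) ^ 2 * U ω + (1 - ρ) ^ 2 * V ω) / ((1 + ρ) * U ω + (1 - ρ) * V ω) * E ω) P
      = volume.withDensity (Set.indicator (Set.Ioi 0) fun x =>
          ENNReal.ofReal ((1 - ρ ^ 2) / (2 * ρ)
            * ∫ y in (1 - ρ)..(1 + ρ), Real.exp (-x / y) / (y * (2 - y) ^ 2))) := by
  obtain ⟨hρ0, hρ1⟩ := hρ
  set g : ℝ × ℝ → ℝ := fun p =>
    ((1 + ρ) ^ 2 * p.1 + (1 - ρ) ^ 2 * p.2) / ((1 + ρ) * p.1 + (1 - ρ) * p.2) with hg_def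
  have hg : Measurable g := by apply Measurable.div <;> fun_prop
  have hmul : Measurable fun q : ℝ × ℝ => q.1 * q.2 := measurable_fst.mul measurable_snd
  have hpair : Measurable fun p : ℝ × ℝ × ℝ => (g (p.1, p.2.1), p.2.2) := by
    exact (hg.comp (measurable_fst.prodMk (measurable_fst.comp measurable_snd))).prodMk
      (measurable_snd.comp measurable_snd)
  have hae : AEMeasurable (fun ω => (U ω, V ω, E ω)) P := by
    by_contra h
    rw [Measure.map_of_not_aemeasurable h] at hlaw
    have h0 : (0 : Measure (ℝ × ℝ × ℝ)) Set.univ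
        = (_root_.expMeasure.prod (_root_.expMeasure.prod _root_.expMeasure)) Set.univ := by
      rw [hlaw]
    simp [measure_univ] at h0
  have hcomp : (fun ω =>
      ((1 + ρ) ^ 2 * U ω + (1 - ρ) ^ 2 * V ω) / ((1 + ρ) * U ω + (1 - ρ) * V ω) * E ω)
      = ((fun q : ℝ × ℝ => q.1 * q.2) ∘ fun p : ℝ × ℝ × ℝ => (g (p.1, p.2.1), p.2.2))
        ∘ (fun ω => (U ω, V ω, E ω)) := rfl
  have h1 := AEMeasurable.map_map_of_aemeasurable
    ((hmul.comp hpair).aemeasurable (μ := Measure.map (fun ω => (U ω, V ω, E ω)) P)) hae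
  rw [hcomp, ← h1, hlaw, ← Measure.map_map hmul hpair]
  have hpair_eq : (fun p : ℝ × ℝ × ℝ => (g (p.1, p.2.1), p.2.2))
      = (Prod.map g id) ∘ ⇑(MeasurableEquiv.prodAssoc (α := ℝ) (β := ℝ) (γ := ℝ)).symm := by
    funext p; rfl
  have hassoc : Measure.map
        (⇑(MeasurableEquiv.prodAssoc (α := ℝ) (β := ℝ) (γ := ℝ)).symm)
        (_root_.expMeasure.prod (_root_.expMeasure.prod _root_.expMeasure))
      = (_root_.expMeasure.prod _root_.expMeasure).prod _root_.expMeasure :=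
    (MeasurePreserving.symm _
      (measurePreserving_prodAssoc _root_.expMeasure _root_.expMeasure _root_.expMeasure)).map_eq
  have hmp : Measure.map (fun p : ℝ × ℝ × ℝ => (g (p.1, p.2.1), p.2.2))
        (_root_.expMeasure.prod (_root_.expMeasure.prod _root_.expMeasure))
      = (Measure.map g (_root_.expMeasure.prod _root_.expMeasure)).prod _root_.expMeasure := by
    rw [hpair_eq, ← Measure.map_map (hg.prodMap measurable_id)
        (MeasurableEquiv.prodAssoc.symm.measurable), hassoc,
      ← Measure.map_prod_map _ _ hg measurable_id, Measure.map_id]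
  rw [hmp]
  have hprob : IsProbabilityMeasure (Measure.map g (_root_.expMeasure.prod _root_.expMeasure)) :=
    Measure.isProbabilityMeasure_map hg.aemeasurable
  exact mixLaw hρ0 hρ1 _ (rLaw hρ0 hρ1)

end
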